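/- arXiv:2603.06747 — 2 statements merged into one kernel-verified Lean document; each statement's English description precedes it below -/
import Mathlib

section
/- For integers n ≥ 3 and m ≥ 2, let S_n be the star graph (the complete bipartite graph K_{1,n}) and P_m the path with m vertices. Then AT(S_n +_R P_m) = 3. -/
open scoped Classical

/-- The outdegree of a vertex `v` in a finite set of arcs `A`. -/
noncomputable def arcOutDeg {V : Type*} (A : Finset (V × V)) (v : V) : ℕ :=
  (A.filter fun a => a.1 = v).card

/-- The indegree of a vertex `v` in a finite set of arcs `A`. -/
noncomputable def arcInDeg {V : Type*} (A : Finset (V × V)) (v : V) : ℕ :=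
  (A.filter fun a => a.2 = v).card

/-- `A` is an orientation of the simple graph `G`: every arc of `A` joins adjacent
vertices, and every edge of `G` receives exactly one of its two possible directions. -/
def IsOrientation {V : Type*} (G : SimpleGraph V) (A : Finset (V × V)) : Prop :=
  (∀ a ∈ A, G.Adj a.1 a.2) ∧ ∀ u v : V, G.Adj u v → ((u, v) ∈ A ↔ (v, u) ∉ A)

/-- A set of arcs is Eulerian if at every vertex the indegree equals the outdegree. -/
def IsEulerianSub {V : Type*} (B : Finset (V × V)) : Prop :=
  ∀ v : V, arcInDeg B v = arcOutDeg B v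

/-- An orientation (given by its arc set `A`) is an Alon–Tarsi orientation if the number
of its even Eulerian sub-digraphs differs from the number of its odd Eulerian
sub-digraphs. -/
def IsATOrientation {V : Type*} (A : Finset (V × V)) : Prop :=
  (A.powerset.filter fun B => IsEulerianSub B ∧ Even B.card).card ≠
    (A.powerset.filter fun B => IsEulerianSub B ∧ ¬ Even B.card).card

/-- The Alon–Tarsi number of `G`: the least `k` such that `G` has an Alon–Tarsi
orientation with maximum outdegree at most `k - 1` (i.e. `< k`). -/
noncomputable def alonTarsiNumber {V : Type*} (G : SimpleGraph V) : ℕ :=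
  sInf {k : ℕ | ∃ A : Finset (V × V),
    IsOrientation G A ∧ IsATOrientation A ∧ ∀ v : V, arcOutDeg A v < k}

/-- A graph is `k`-degenerate if every nonempty (induced) subgraph has a vertex of
degree at most `k`. -/
def Degenerate {V : Type*} (k : ℕ) (G : SimpleGraph V) : Prop :=
  ∀ s : Finset V, s.Nonempty → ∃ v ∈ s, (s.filter fun u => G.Adj v u).card ≤ k

/-- The subdivision graph `S(G)`: each edge `uv` of `G` is replaced by a path `u-e-v`
through the new vertex `e` corresponding to `uv`. -/
def subdivisionGraph {V : Type*} (G : SimpleGraph V) : SimpleGraph (V ⊕ ↥G.edgeSet) :=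
  SimpleGraph.fromRel fun a b =>
    match a, b with
    | Sum.inl u, Sum.inr e => u ∈ (e : Sym2 V)
    | _, _ => False

/-- The graph `R(G)`: `G` together with, for each edge `uv`, a new vertex joined to
`u` and `v`. -/
def rGraph {V : Type*} (G : SimpleGraph V) : SimpleGraph (V ⊕ ↥G.edgeSet) :=
  SimpleGraph.fromRel fun a b =>
    match a, b with
    | Sum.inl u, Sum.inl v => G.Adj u v
    | Sum.inl u, Sum.inr e => u ∈ (e : Sym2 V)
    | _, _ => False

/-- The graph `Q(G)`: new vertices joined to the endpoints of their edges, and two new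
vertices joined iff the corresponding edges of `G` share an endpoint; original
vertices are pairwise nonadjacent. -/
def qGraph {V : Type*} (G : SimpleGraph V) : SimpleGraph (V ⊕ ↥G.edgeSet) :=
  SimpleGraph.fromRel fun a b =>
    match a, b with
    | Sum.inl u, Sum.inr e => u ∈ (e : Sym2 V)
    | Sum.inr e, Sum.inr f => e ≠ f ∧ ∃ u : V, u ∈ (e : Sym2 V) ∧ u ∈ (f : Sym2 V)
    | _, _ => False

/-- The total graph `T(G)`. -/
def tGraph {V : Type*} (G : SimpleGraph V) : SimpleGraph (V ⊕ ↥G.edgeSet) :=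
  SimpleGraph.fromRel fun a b =>
    match a, b with
    | Sum.inl u, Sum.inl v => G.Adj u v
    | Sum.inl u, Sum.inr e => u ∈ (e : Sym2 V)
    | Sum.inr e, Sum.inr f => e ≠ f ∧ ∃ u : V, u ∈ (e : Sym2 V) ∧ u ∈ (f : Sym2 V)
    | _, _ => False

/-- The `F`-sum construction: given a graph `K` on `V ⊕ E` (playing the role of `F(G)`,
whose "original" vertices are those of the form `Sum.inl u`) and a graph `H` on `W`,
two vertices `(u₁, u₂)` and `(v₁, v₂)` are adjacent iff either `u₁ = v₁` is an original
vertex and `u₂v₂ ∈ E(H)`, or `u₂ = v₂` and `u₁v₁ ∈ E(K)`. -/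
def fSum {V E W : Type*} (K : SimpleGraph (V ⊕ E)) (H : SimpleGraph W) :
    SimpleGraph ((V ⊕ E) × W) :=
  SimpleGraph.fromRel fun a b =>
    (a.1 = b.1 ∧ (∃ u : V, a.1 = Sum.inl u) ∧ H.Adj a.2 b.2) ∨
      (a.2 = b.2 ∧ K.Adj a.1 b.1)

/-- The `S`-sum `G +_S H`. -/
def sSum {V W : Type*} (G : SimpleGraph V) (H : SimpleGraph W) :
    SimpleGraph ((V ⊕ ↥G.edgeSet) × W) :=
  fSum (subdivisionGraph G) H

/-- The `R`-sum `G +_R H`. -/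
def rSum {V W : Type*} (G : SimpleGraph V) (H : SimpleGraph W) :
    SimpleGraph ((V ⊕ ↥G.edgeSet) × W) :=
  fSum (rGraph G) H

/-- The `Q`-sum `G +_Q H`. -/
def qSum {V W : Type*} (G : SimpleGraph V) (H : SimpleGraph W) :
    SimpleGraph ((V ⊕ ↥G.edgeSet) × W) :=
  fSum (qGraph G) H

/-- The `T`-sum `G +_T H`. -/
def tSum {V W : Type*} (G : SimpleGraph V) (H : SimpleGraph W) :
    SimpleGraph ((V ⊕ ↥G.edgeSet) × W) :=
  fSum (tGraph G) H

/-- The star graph `S_n = K_{1,n}`. -/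
def starGraph (n : ℕ) : SimpleGraph (Fin 1 ⊕ Fin n) :=
  completeBipartiteGraph (Fin 1) (Fin n)

lemma eulerian_empty {V : Type*} : IsEulerianSub (∅ : Finset (V × V)) := by
  intro v; simp [arcInDeg, arcOutDeg]

lemma at_of_rank {V : Type*} (A : Finset (V × V)) (ρ : V → ℕ)
    (h : ∀ a ∈ A, ρ a.1 < ρ a.2) : IsATOrientation A := by
  have key : ∀ B : Finset (V × V), B ⊆ A → IsEulerianSub B → B = ∅ := by
    intro B hBA hE
    by_contra hne
    have hBne : B.Nonempty := Finset.nonempty_iff_ne_empty.mpr hne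
    obtain ⟨b, hbB, hbmax⟩ := B.exists_max_image (fun x => ρ x.2) hBne
    have hin : 0 < arcInDeg B b.2 := by
      apply Finset.card_pos.mpr
      exact ⟨b, Finset.mem_filter.mpr ⟨hbB, rfl⟩⟩
    have hout : 0 < arcOutDeg B b.2 := by rw [← hE b.2]; exact hin
    obtain ⟨c, hc⟩ := Finset.card_pos.mp hout
    rw [Finset.mem_filter] at hc
    have h1 : ρ c.2 ≤ ρ b.2 := hbmax c hc.1
    have h2 : ρ c.1 < ρ c.2 := h c (hBA hc.1)
    rw [hc.2] at h2
    omega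
  have he : A.powerset.filter (fun B => IsEulerianSub B ∧ Even B.card) = {∅} := by
    ext B
    simp only [Finset.mem_filter, Finset.mem_powerset, Finset.mem_singleton]
    constructor
    · rintro ⟨h1, h2, _⟩; exact key B h1 h2
    · rintro rfl; exact ⟨Finset.empty_subset _, eulerian_empty, by simp⟩
  have ho : A.powerset.filter (fun B => IsEulerianSub B ∧ ¬ Even B.card) = ∅ := by
    ext B
    simp only [Finset.mem_filter, Finset.mem_powerset, Finset.notMem_empty, iff_false, not_and]
    intro h1 h2 h3
    exact h3 (by rw [key B h1 h2]; simp)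
  rw [IsATOrientation, he, ho]
  simp

lemma star_adj {n : ℕ} {a b : Fin 1 ⊕ Fin n} : (starGraph n).Adj a b ↔
    (∃ z i, a = Sum.inl z ∧ b = Sum.inr i) ∨ (∃ z i, a = Sum.inr i ∧ b = Sum.inl z) := by
  cases a <;> cases b <;> simp [starGraph]

lemma rGraph_adj {V : Type*} {G : SimpleGraph V} {x y : V ⊕ ↥G.edgeSet} :
    (rGraph G).Adj x y ↔
      (∃ u v, x = Sum.inl u ∧ y = Sum.inl v ∧ G.Adj u v) ∨
      (∃ u e, x = Sum.inl u ∧ y = Sum.inr e ∧ u ∈ (e : Sym2 V)) ∨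
      (∃ u e, x = Sum.inr e ∧ y = Sum.inl u ∧ u ∈ (e : Sym2 V)) := by
  cases x <;> cases y <;> simp [rGraph, SimpleGraph.fromRel_adj]
  · rename_i u v
    constructor
    · rintro ⟨hne, h | h⟩
      · exact h
      · exact h.symm
    · intro h; exact ⟨G.ne_of_adj h, Or.inl h⟩

lemma rSum_adj {V W : Type*} {G : SimpleGraph V} {H : SimpleGraph W}
    {a b : (V ⊕ ↥G.edgeSet) × W} :
    (rSum G H).Adj a b ↔
      (a.1 = b.1 ∧ (∃ u : V, a.1 = Sum.inl u) ∧ H.Adj a.2 b.2) ∨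
      (a.2 = b.2 ∧ (rGraph G).Adj a.1 b.1) := by
  rw [rSum, fSum, SimpleGraph.fromRel_adj]
  constructor
  · rintro ⟨hne, (h | h) | (h | h)⟩
    · exact Or.inl h
    · exact Or.inr h
    · exact Or.inl ⟨h.1.symm, h.1 ▸ h.2.1, h.2.2.symm⟩
    · exact Or.inr ⟨h.1.symm, h.2.symm⟩
  · rintro (h | h)
    · refine ⟨?_, Or.inl (Or.inl h)⟩
      intro hab; exact H.ne_of_adj h.2.2 (by rw [hab])
    · refine ⟨?_, Or.inl (Or.inr h)⟩
      intro hab; exact (rGraph G).ne_of_adj h.2 (by rw [hab])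

def cls {n : ℕ} : (Fin 1 ⊕ Fin n) ⊕ ↥(starGraph n).edgeSet → ℕ
  | .inr _ => 0
  | .inl (.inr _) => 1
  | .inl (.inl _) => 2

lemma cls_ne {n : ℕ} {x y : (Fin 1 ⊕ Fin n) ⊕ ↥(starGraph n).edgeSet}
    (h : (rGraph (starGraph n)).Adj x y) : cls x ≠ cls y := by
  rw [rGraph_adj] at h
  rcases h with ⟨u, v, rfl, rfl, h⟩ | ⟨u, e, rfl, rfl, h⟩ | ⟨u, e, rfl, rfl, h⟩
  · rcases star_adj.mp h with ⟨z, i, rfl, rfl⟩ | ⟨z, i, rfl, rfl⟩ <;> simp [cls]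
  · rcases u with z | i <;> simp [cls]
  · rcases u with z | i <;> simp [cls]

def rk {n m : ℕ} (p : ((Fin 1 ⊕ Fin n) ⊕ ↥(starGraph n).edgeSet) × Fin m) : ℕ :=
  3 * p.2.val + cls p.1

lemma rk_ne {n m : ℕ} {a b : ((Fin 1 ⊕ Fin n) ⊕ ↥(starGraph n).edgeSet) × Fin m}
    (h : (rSum (starGraph n) (SimpleGraph.pathGraph m)).Adj a b) : rk a ≠ rk b := by
  rcases rSum_adj.mp h with ⟨h1, _, h2⟩ | ⟨h1, h2⟩
  · rw [SimpleGraph.pathGraph_adj] at h2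
    simp only [rk, h1]
    omega
  · have := cls_ne h2
    simp only [rk, h1]
    omega

lemma cls_le_two {n : ℕ} (x : (Fin 1 ⊕ Fin n) ⊕ ↥(starGraph n).edgeSet) : cls x ≤ 2 := by
  rcases x with (z | i) | e <;> simp [cls]

lemma cls_eq_two {n : ℕ} {x : (Fin 1 ⊕ Fin n) ⊕ ↥(starGraph n).edgeSet}
    (h : cls x = 2) : ∃ z, x = Sum.inl (Sum.inl z) := by
  rcases x with (z | i) | e <;> simp_all [cls]

noncomputable def OA (n m : ℕ) :
    Finset ((((Fin 1 ⊕ Fin n) ⊕ ↥(starGraph n).edgeSet) × Fin m) ×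
           (((Fin 1 ⊕ Fin n) ⊕ ↥(starGraph n).edgeSet) × Fin m)) :=
  Finset.univ.filter fun a =>
    (rSum (starGraph n) (SimpleGraph.pathGraph m)).Adj a.1 a.2 ∧ rk a.1 < rk a.2

lemma mem_OA {n m : ℕ} {a} : a ∈ OA n m ↔
    (rSum (starGraph n) (SimpleGraph.pathGraph m)).Adj a.1 a.2 ∧ rk a.1 < rk a.2 := by
  simp [OA]

lemma out_center {n m : ℕ} {z : Fin 1} {j : Fin m} {a} (ha : a ∈ OA n m)
    (h1 : a.1 = (Sum.inl (Sum.inl z), j)) :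
    a.2.1 = Sum.inl (Sum.inl z) ∧ (a.2.2 : ℕ) = (j : ℕ) + 1 := by
  obtain ⟨⟨x1, j1⟩, y, j'⟩ := a
  obtain ⟨rfl, rfl⟩ := Prod.mk.injEq .. ▸ h1
  obtain ⟨hadj, hrk⟩ := mem_OA.mp ha
  simp only [rk] at hrk
  dsimp only at hrk ⊢
  rcases rSum_adj.mp hadj with ⟨e1, _, e2⟩ | ⟨e1, e2⟩ <;> dsimp only at e1 e2
  · subst e1
    rw [SimpleGraph.pathGraph_adj] at e2
    exact ⟨rfl, by omega⟩
  · exfalso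
    have h2 : cls (Sum.inl (Sum.inl z) : (Fin 1 ⊕ Fin n) ⊕ ↥(starGraph n).edgeSet) = 2 := rfl
    have := cls_le_two y
    subst e1
    rw [h2] at hrk
    omega

lemma out_leaf {n m : ℕ} {i : Fin n} {j : Fin m} {a} (ha : a ∈ OA n m)
    (h1 : a.1 = (Sum.inl (Sum.inr i), j)) :
    (a.2.1 = Sum.inl (Sum.inr i) ∧ (a.2.2 : ℕ) = (j : ℕ) + 1) ∨
    (∃ z, a.2 = (Sum.inl (Sum.inl z), j)) := by
  obtain ⟨⟨x1, j1⟩, y, j'⟩ := a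
  obtain ⟨rfl, rfl⟩ := Prod.mk.injEq .. ▸ h1
  obtain ⟨hadj, hrk⟩ := mem_OA.mp ha
  simp only [rk] at hrk
  dsimp only at hrk ⊢
  rcases rSum_adj.mp hadj with ⟨e1, _, e2⟩ | ⟨e1, e2⟩ <;> dsimp only at e1 e2
  · subst e1
    rw [SimpleGraph.pathGraph_adj] at e2
    exact Or.inl ⟨rfl, by omega⟩
  · have h1c : cls (Sum.inl (Sum.inr i) : (Fin 1 ⊕ Fin n) ⊕ ↥(starGraph n).edgeSet) = 1 := rfl
    rw [h1c] at hrk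
    have hle := cls_le_two y
    have h2 : cls y = 2 := by subst e1; omega
    obtain ⟨zz, hz⟩ := cls_eq_two h2
    exact Or.inr ⟨zz, by rw [hz, e1]⟩

lemma out_edge {n m : ℕ} {e : ↥(starGraph n).edgeSet} {j : Fin m} {a} (ha : a ∈ OA n m)
    (h1 : a.1 = (Sum.inr e, j)) :
    ∃ u, a.2 = (Sum.inl u, j) ∧ u ∈ (e : Sym2 (Fin 1 ⊕ Fin n)) := by
  obtain ⟨⟨x1, j1⟩, y, j'⟩ := a
  obtain ⟨rfl, rfl⟩ := Prod.mk.injEq .. ▸ h1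
  obtain ⟨hadj, _⟩ := mem_OA.mp ha
  rcases rSum_adj.mp hadj with ⟨e1, hex, e2⟩ | ⟨e1, e2⟩ <;> dsimp only at e1 e2 ⊢
  · exfalso; obtain ⟨u, hu⟩ := hex; exact absurd hu (by simp)
  · subst e1
    rcases rGraph_adj.mp e2 with ⟨u, v, h, _⟩ | ⟨u, f, h, _⟩ | ⟨u, f, h, h', hm⟩
    · exact absurd h (by simp)
    · exact absurd h (by simp)
    · have hfe : f = e := by simpa using h.symm
      exact ⟨u, by rw [h'], hfe ▸ hm⟩

abbrev VTy (n m : ℕ) := ((Fin 1 ⊕ Fin n) ⊕ ↥(starGraph n).edgeSet) × Fin m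

lemma arcOutDeg_eq {V : Type*} [DecidableEq V] (A : Finset (V × V)) (v : V) :
    arcOutDeg A v = (A.filter fun a => a.1 = v).card := by
  rw [arcOutDeg]
  congr 1
  exact Finset.filter_congr_decidable _ _ _

lemma card_le_one_of_eq {α : Type*} {s : Finset α} (h : ∀ a ∈ s, ∀ b ∈ s, a = b) :
    s.card ≤ 1 := Finset.card_le_one.mpr h

lemma OA_outdeg {n m : ℕ} (v : ((Fin 1 ⊕ Fin n) ⊕ ↥(starGraph n).edgeSet) × Fin m) :
    ((OA n m).filter fun a => a.1 = v).card ≤ 2 := by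
  obtain ⟨x, j⟩ := v
  rcases x with (z | i) | e
  · -- center
    refine le_trans (card_le_one_of_eq ?_) (by norm_num)
    intro a ha b hb
    rw [Finset.mem_filter] at ha hb
    obtain ⟨ha1, ha2⟩ := out_center ha.1 ha.2
    obtain ⟨hb1, hb2⟩ := out_center hb.1 hb.2
    have h2 : a.2 = b.2 := Prod.ext (ha1.trans hb1.symm) (Fin.ext (ha2.trans hb2.symm))
    exact Prod.ext (ha.2.trans hb.2.symm) h2
  · -- leaf
    have hsub : ((OA n m).filter fun a => a.1 = (Sum.inl (Sum.inr i), j)) ⊆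
        (Finset.univ.filter fun a => a.1 = (Sum.inl (Sum.inr i), j) ∧
          a.2.1 = Sum.inl (Sum.inr i) ∧ (a.2.2 : ℕ) = (j : ℕ) + 1) ∪
        (Finset.univ.filter fun a => a.1 = (Sum.inl (Sum.inr i), j) ∧
          ∃ z, a.2 = (Sum.inl (Sum.inl z), j)) := by
      intro a ha
      rw [Finset.mem_filter] at ha
      rcases out_leaf ha.1 ha.2 with h | h
      · exact Finset.mem_union_left _ (Finset.mem_filter.mpr ⟨Finset.mem_univ _, ha.2, h⟩)
      · exact Finset.mem_union_right _ (Finset.mem_filter.mpr ⟨Finset.mem_univ _, ha.2, h⟩)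
    refine le_trans (Finset.card_le_card hsub) (le_trans (Finset.card_union_le _ _) ?_)
    have c1 : (Finset.univ.filter fun
        (a : VTy n m × VTy n m) =>
          a.1 = (Sum.inl (Sum.inr i), j) ∧
          a.2.1 = Sum.inl (Sum.inr i) ∧ (a.2.2 : ℕ) = (j : ℕ) + 1).card ≤ 1 := by
      apply card_le_one_of_eq
      intro a ha b hb
      rw [Finset.mem_filter] at ha hb
      obtain ⟨_, ha1, ha2, ha3⟩ := ha
      obtain ⟨_, hb1, hb2, hb3⟩ := hb
      exact Prod.ext (ha1.trans hb1.symm)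
        (Prod.ext (ha2.trans hb2.symm) (Fin.ext (ha3.trans hb3.symm)))
    have c2 : (Finset.univ.filter fun
        (a : VTy n m × VTy n m) =>
          a.1 = (Sum.inl (Sum.inr i), j) ∧ ∃ z, a.2 = (Sum.inl (Sum.inl z), j)).card ≤ 1 := by
      apply card_le_one_of_eq
      intro a ha b hb
      rw [Finset.mem_filter] at ha hb
      obtain ⟨_, ha1, za, ha2⟩ := ha
      obtain ⟨_, hb1, zb, hb2⟩ := hb
      have : za = zb := Subsingleton.elim _ _
      subst this
      exact Prod.ext (ha1.trans hb1.symm) (ha2.trans hb2.symm)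
    exact le_trans (Nat.add_le_add c1 c2) (by norm_num)
  · -- edge vertex
    obtain ⟨⟨p, q⟩, hpq⟩ := Quot.exists_rep (e : Sym2 (Fin 1 ⊕ Fin n))
    have hmem : ∀ u, u ∈ (e : Sym2 (Fin 1 ⊕ Fin n)) ↔ u = p ∨ u = q := by
      intro u; rw [← hpq]; exact Sym2.mem_iff
    have hsub : ((OA n m).filter fun a => a.1 = (Sum.inr e, j)) ⊆
        (Finset.univ.filter fun a => a.1 = (Sum.inr e, j) ∧ a.2 = (Sum.inl p, j)) ∪
        (Finset.univ.filter fun a => a.1 = (Sum.inr e, j) ∧ a.2 = (Sum.inl q, j)) := by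
      intro a ha
      rw [Finset.mem_filter] at ha
      obtain ⟨u, hu1, hu2⟩ := out_edge ha.1 ha.2
      rcases (hmem u).mp hu2 with rfl | rfl
      · exact Finset.mem_union_left _ (Finset.mem_filter.mpr ⟨Finset.mem_univ _, ha.2, hu1⟩)
      · exact Finset.mem_union_right _ (Finset.mem_filter.mpr ⟨Finset.mem_univ _, ha.2, hu1⟩)
    refine le_trans (Finset.card_le_card hsub) (le_trans (Finset.card_union_le _ _) ?_)
    have c1 : ∀ w : ((Fin 1 ⊕ Fin n) ⊕ ↥(starGraph n).edgeSet) × Fin m,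
        (Finset.univ.filter fun
          (a : VTy n m × VTy n m) =>
          a.1 = (Sum.inr e, j) ∧ a.2 = w).card ≤ 1 := by
      intro w
      apply card_le_one_of_eq
      intro a ha b hb
      rw [Finset.mem_filter] at ha hb
      exact Prod.ext (ha.2.1.trans hb.2.1.symm) (ha.2.2.trans hb.2.2.symm)
    exact le_trans (Nat.add_le_add (c1 (Sum.inl p, j)) (c1 (Sum.inl q, j))) (by norm_num)



lemma star_center_adj {n : ℕ} (i : Fin n) :
    (starGraph n).Adj (Sum.inl 0) (Sum.inr i) := by simp [starGraph]

noncomputable def eE {n : ℕ} (i : Fin n) : ↥(starGraph n).edgeSet :=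
  ⟨s(Sum.inl 0, Sum.inr i), (SimpleGraph.mem_edgeSet _).mpr (star_center_adj i)⟩

lemma eE_inj {n : ℕ} {i j : Fin n} (h : eE i = eE j) : i = j := by
  simpa [eE, Subtype.ext_iff, Sym2.eq_iff] using h

lemma lower_bound {n m k : ℕ} (hn : 3 ≤ n) (hm : 2 ≤ m) (A : Finset (VTy n m × VTy n m))
    (hOr : IsOrientation (rSum (starGraph n) (SimpleGraph.pathGraph m)) A)
    (hdeg : ∀ v, arcOutDeg A v < k) : 3 ≤ k := by
  by_contra hk
  have hd1 : ∀ v, arcOutDeg A v ≤ 1 := fun v => by have := hdeg v; omega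
  set G := rSum (starGraph n) (SimpleGraph.pathGraph m) with hG
  have hm0 : 0 < m := by omega
  set j0 : Fin m := ⟨0, hm0⟩ with hj0
  set c0 : VTy n m := (Sum.inl (Sum.inl 0), j0) with hc0
  set vL : Fin n → VTy n m := fun i => (Sum.inl (Sum.inr i), j0) with hvL
  set vE : Fin n → VTy n m := fun i => (Sum.inr (eE i), j0) with hvE
  set S : Finset (VTy n m) :=
    insert c0 ((Finset.univ.image vL) ∪ (Finset.univ.image vE)) with hS
  have hScard : S.card ≤ 2 * n + 1 := by
    refine le_trans (Finset.card_insert_le _ _) ?_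
    have := Finset.card_union_le (Finset.univ.image vL) (Finset.univ.image vE)
    have h1 := Finset.card_image_le (s := (Finset.univ : Finset (Fin n))) (f := vL)
    have h2 := Finset.card_image_le (s := (Finset.univ : Finset (Fin n))) (f := vE)
    simp only [Finset.card_univ, Fintype.card_fin] at h1 h2
    omega
  -- the chosen arc for each edge
  set pick : VTy n m → VTy n m → VTy n m × VTy n m :=
    fun u v => if (u, v) ∈ A then (u, v) else (v, u) with hpick
  have hpickA : ∀ u v, G.Adj u v → pick u v ∈ A := by
    intro u v h
    simp only [hpick]
    split_ifs with hif
    · exact hif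
    · by_contra hc
      exact hif ((hOr.2 u v h).mpr hc)
  have hpick_cases : ∀ u v, pick u v = (u, v) ∨ pick u v = (v, u) := by
    intro u v; simp only [hpick]; split_ifs <;> simp
  have hpick_eq : ∀ u v u' v', pick u v = pick u' v' →
      (u = u' ∧ v = v') ∨ (u = v' ∧ v = u') := by
    intro u v u' v' h
    rcases hpick_cases u v with h1 | h1 <;> rcases hpick_cases u' v' with h2 | h2 <;>
      rw [h1, h2, Prod.mk.injEq] at h <;> tauto
  -- adjacency facts
  have hadj1 : ∀ i : Fin n, G.Adj c0 (vL i) := by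
    intro i
    exact rSum_adj.mpr (Or.inr ⟨rfl, rGraph_adj.mpr
      (Or.inl ⟨Sum.inl 0, Sum.inr i, rfl, rfl, star_center_adj i⟩)⟩)
  have hadj2 : ∀ i : Fin n, G.Adj c0 (vE i) := by
    intro i
    refine rSum_adj.mpr (Or.inr ⟨rfl, rGraph_adj.mpr
      (Or.inr (Or.inl ⟨Sum.inl 0, eE i, rfl, rfl, ?_⟩))⟩)
    simp [eE]
  have hadj3 : ∀ i : Fin n, G.Adj (vL i) (vE i) := by
    intro i
    refine rSum_adj.mpr (Or.inr ⟨rfl, rGraph_adj.mpr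
      (Or.inr (Or.inl ⟨Sum.inr i, eE i, rfl, rfl, ?_⟩))⟩)
    simp [eE]
  -- membership of endpoints in S
  have hc0S : c0 ∈ S := Finset.mem_insert_self _ _
  have hvLS : ∀ i, vL i ∈ S := fun i => Finset.mem_insert_of_mem
    (Finset.mem_union_left _ (Finset.mem_image_of_mem _ (Finset.mem_univ i)))
  have hvES : ∀ i, vE i ∈ S := fun i => Finset.mem_insert_of_mem
    (Finset.mem_union_right _ (Finset.mem_image_of_mem _ (Finset.mem_univ i)))
  -- the injection
  set φ : Fin n × Fin 3 → VTy n m × VTy n m := fun p =>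
    if p.2 = 0 then pick c0 (vL p.1)
    else if p.2 = 1 then pick c0 (vE p.1)
    else pick (vL p.1) (vE p.1) with hφ
  set F : Finset (VTy n m × VTy n m) := A.filter (fun a => a.1 ∈ S) with hF
  have hmaps : ∀ p : Fin n × Fin 3, p ∈ (Finset.univ : Finset (Fin n × Fin 3)) → φ p ∈ F := by
    rintro ⟨i, t⟩ -
    have key : ∀ u v, u ∈ S → v ∈ S → G.Adj u v → pick u v ∈ F := by
      intro u v hu hv hadj
      rw [hF, Finset.mem_filter]
      refine ⟨hpickA u v hadj, ?_⟩
      rcases hpick_cases u v with h | h <;> rw [h] <;> assumption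
    fin_cases t
    · exact key _ _ hc0S (hvLS i) (hadj1 i)
    · exact key _ _ hc0S (hvES i) (hadj2 i)
    · exact key _ _ (hvLS i) (hvES i) (hadj3 i)
  have hinj : Set.InjOn φ (Finset.univ : Finset (Fin n × Fin 3)) := by
    rintro ⟨i, t⟩ - ⟨j, s⟩ - h
    have hne1 : ∀ j : Fin n, c0 ≠ vL j := by intro j; simp [hc0, hvL]
    have hne2 : ∀ j : Fin n, c0 ≠ vE j := by intro j; simp [hc0, hvE]
    have hne3 : ∀ i j : Fin n, vL i ≠ vE j := by intro i j; simp [hvL, hvE]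
    have hLi : ∀ i j : Fin n, vL i = vL j → i = j := by
      intro i j hh; simpa [hvL] using hh
    have hEi : ∀ i j : Fin n, vE i = vE j → i = j := by
      intro i j hh
      rw [hvE] at hh
      simp only [Prod.mk.injEq, Sum.inr.injEq] at hh
      exact eE_inj hh.1
    fin_cases t <;> fin_cases s <;>
      simp only [hφ, Prod.mk.injEq] at h ⊢ <;>
      rcases hpick_eq _ _ _ _ h with ⟨h1, h2⟩ | ⟨h1, h2⟩
    · exact ⟨hLi _ _ h2, trivial⟩
    · exact absurd h1 (hne1 _)
    · exact absurd h2 (hne3 i j)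
    · exact absurd h1 (hne2 j)
    · exact absurd h1 (hne1 _)
    · exact absurd h1 (hne2 j)
    · exact absurd h2.symm (hne3 j i)
    · exact absurd h1 (hne1 _)
    · exact ⟨hEi _ _ h2, trivial⟩
    · exact absurd h1 (hne2 j)
    · exact absurd h1 (hne1 _)
    · exact absurd h1 (hne2 j)
    · exact absurd h1.symm (hne1 _)
    · exact absurd h2.symm (hne2 i)
    · exact absurd h1.symm (hne1 _)
    · exact absurd h1 (hne3 i j)
    · exact ⟨hLi _ _ h1, trivial⟩
    · exact absurd h1 (hne3 i j)
  have hcard1 : 3 * n ≤ F.card := by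
    have := Finset.card_le_card_of_injOn φ hmaps hinj
    simpa [Finset.card_univ, mul_comm] using this
  have hcard2 : F.card ≤ 2 * n + 1 := by
    have hfib : F.card = ∑ v ∈ S, (F.filter fun a => a.1 = v).card := by
      apply Finset.card_eq_sum_card_fiberwise
      intro a ha
      simp only [Finset.mem_coe, hF, Finset.mem_filter] at ha
      exact Finset.mem_coe.mpr ha.2
    have hterm : ∀ v ∈ S, (F.filter fun a => a.1 = v).card ≤ 1 := by
      intro v _
      refine le_trans ?_ (hd1 v)
      rw [arcOutDeg_eq]
      apply Finset.card_le_card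
      intro a ha
      rw [Finset.mem_filter] at ha ⊢
      rw [hF, Finset.mem_filter] at ha
      exact ⟨ha.1.1, ha.2⟩
    calc F.card = ∑ v ∈ S, (F.filter fun a => a.1 = v).card := hfib
      _ ≤ ∑ _v ∈ S, 1 := Finset.sum_le_sum hterm
      _ = S.card := by simp
      _ ≤ 2 * n + 1 := hScard
  omega

/-- `AT(S_n +_R P_m) = 3` for `n ≥ 3`, `m ≥ 2`. -/
theorem stmt11 (n m : ℕ) (hn : 3 ≤ n) (hm : 2 ≤ m) :
    alonTarsiNumber (rSum (starGraph n) (SimpleGraph.pathGraph m)) = 3 := by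
  have h3 : 3 ∈ {k : ℕ | ∃ A : Finset ((((Fin 1 ⊕ Fin n) ⊕ ↥(starGraph n).edgeSet) × Fin m) ×
      (((Fin 1 ⊕ Fin n) ⊕ ↥(starGraph n).edgeSet) × Fin m)),
      IsOrientation (rSum (starGraph n) (SimpleGraph.pathGraph m)) A ∧ IsATOrientation A ∧
      ∀ v, arcOutDeg A v < 3} := by
    refine ⟨OA n m, ?_, ?_, ?_⟩
    · constructor
      · intro a ha; exact (mem_OA.mp ha).1
      · intro u v h
        have hne := rk_ne h
        constructor
        · intro h1 h2
          obtain ⟨_, hlt1⟩ := mem_OA.mp h1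
          obtain ⟨_, hlt2⟩ := mem_OA.mp h2
          dsimp only at hlt1 hlt2
          omega
        · intro h2
          rw [mem_OA]
          refine ⟨h, ?_⟩
          dsimp only
          have : ¬ rk v < rk u := fun hh => h2 (mem_OA.mpr ⟨h.symm, hh⟩)
          omega
    · exact at_of_rank _ rk (fun a ha => (mem_OA.mp ha).2)
    · intro v
      rw [arcOutDeg_eq]
      exact lt_of_le_of_lt (OA_outdeg v) (by norm_num)
  apply le_antisymm
  · exact Nat.sInf_le h3
  · refine le_csInf ⟨3, h3⟩ ?_
    rintro b ⟨A, hOr, _, hdeg⟩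
    exact lower_bound hn hm A hOr hdeg
end

section
/- Let G be a k-degenerate graph with maximum degree Δ(G) > 1 and let H be an l-degenerate graph. Then AT(G +_Q H) ≤ max{2Δ(G) − 2, k + l} + 1. -/
open scoped Classical

section AuxAT

variable {V : Type*}

lemma eulerianSub_empty : IsEulerianSub (∅ : Finset (V × V)) := fun v => by
  simp [arcInDeg, arcOutDeg]

lemma eulerianSub_eq_empty_of_rank (r : V → ℕ) {A B : Finset (V × V)}
    (hA : ∀ a ∈ A, r a.2 < r a.1) (hBA : B ⊆ A) (hB : IsEulerianSub B) : B = ∅ := by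
  by_contra hne
  obtain ⟨b, hbB, hmin⟩ := Finset.exists_min_image B (fun a => r a.2)
    (Finset.nonempty_of_ne_empty hne)
  have hin : 0 < arcInDeg B b.2 :=
    Finset.card_pos.2 ⟨b, Finset.mem_filter.2 ⟨hbB, rfl⟩⟩
  rw [hB b.2] at hin
  obtain ⟨c, hc⟩ := Finset.card_pos.1 hin
  rw [Finset.mem_filter] at hc
  have h1 : r c.2 < r c.1 := hA c (hBA hc.1)
  rw [hc.2] at h1
  exact absurd (hmin c hc.1) (not_le.2 h1)

lemma isAT_of_rank (r : V → ℕ) {A : Finset (V × V)}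
    (hA : ∀ a ∈ A, r a.2 < r a.1) : IsATOrientation A := by
  have he : A.powerset.filter (fun B => IsEulerianSub B ∧ Even B.card) = {∅} := by
    ext B
    simp only [Finset.mem_filter, Finset.mem_powerset, Finset.mem_singleton]
    constructor
    · rintro ⟨h1, h2, _⟩; exact eulerianSub_eq_empty_of_rank r hA h1 h2
    · rintro rfl
      exact ⟨Finset.empty_subset _, eulerianSub_empty, by simp⟩
  have ho : A.powerset.filter (fun B => IsEulerianSub B ∧ ¬ Even B.card) = ∅ := by
    rw [Finset.filter_eq_empty_iff]
    rintro B hB ⟨h2, h3⟩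
    rw [Finset.mem_powerset] at hB
    rw [eulerianSub_eq_empty_of_rank r hA hB h2] at h3
    simp at h3
  rw [IsATOrientation, he, ho]
  simp

lemma exists_acyclic_orientation [Fintype V] (G : SimpleGraph V) (m : ℕ)
    (hG : Degenerate m G) (s : Finset V) :
    ∃ (A : Finset (V × V)) (r : V → ℕ),
      (∀ a ∈ A, a.1 ∈ s ∧ a.2 ∈ s ∧ G.Adj a.1 a.2) ∧
      (∀ u v : V, u ∈ s → v ∈ s → G.Adj u v → ((u, v) ∈ A ↔ (v, u) ∉ A)) ∧
      (∀ a ∈ A, r a.2 < r a.1) ∧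
      (∀ u ∈ s, r u < s.card) ∧
      (∀ v : V, arcOutDeg A v ≤ m) := by
  induction s using Finset.strongInduction with
  | _ s ih =>
    rcases Finset.eq_empty_or_nonempty s with rfl | hs
    · exact ⟨∅, fun _ => 0, by simp, by simp, by simp, by simp,
        fun v => by simp [arcOutDeg]⟩
    · obtain ⟨v, hv, hdeg⟩ := hG s hs
      obtain ⟨A', r', h1, h2, h3, h4, h5⟩ := ih (s.erase v) (Finset.erase_ssubset hv)
      set s' := s.erase v with hs'
      set N := (s'.filter (fun u => G.Adj v u)).image (fun u => (v, u)) with hN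
      have hmemN : ∀ p : V × V, p ∈ N ↔ p.1 = v ∧ p.2 ∈ s' ∧ G.Adj v p.2 := by
        intro p
        simp only [hN, Finset.mem_image, Finset.mem_filter]
        constructor
        · rintro ⟨u, ⟨hu1, hu2⟩, rfl⟩; exact ⟨rfl, hu1, hu2⟩
        · rintro ⟨hp1, hp2, hp3⟩
          exact ⟨p.2, ⟨hp2, hp3⟩, by rw [← hp1]⟩
      have hvns' : v ∉ s' := Finset.notMem_erase v s
      refine ⟨A' ∪ N, fun u => if u = v then s'.card else r' u, ?_, ?_, ?_, ?_, ?_⟩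
      · intro a ha
        rcases Finset.mem_union.1 ha with ha' | haN
        · obtain ⟨e1, e2, e3⟩ := h1 a ha'
          exact ⟨Finset.mem_of_mem_erase e1, Finset.mem_of_mem_erase e2, e3⟩
        · obtain ⟨e1, e2, e3⟩ := (hmemN a).1 haN
          exact ⟨e1 ▸ hv, Finset.mem_of_mem_erase e2, e1 ▸ e3⟩
      · intro u z hu hz hadj
        by_cases hu' : u = v
        · subst hu'
          by_cases hz' : z = u
          · subst hz'; exact absurd hadj (G.irrefl)
          · refine iff_of_true ?_ ?_
            · exact Finset.mem_union.2 (Or.inr ((hmemN (u, z)).2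
                ⟨rfl, Finset.mem_erase.2 ⟨hz', hz⟩, hadj⟩))
            · intro hmem
              rcases Finset.mem_union.1 hmem with hA' | hN'
              · exact hvns' (h1 _ hA').2.1
              · exact hz' ((hmemN (z, u)).1 hN').1
        · by_cases hz' : z = v
          · subst hz'
            refine iff_of_false ?_ ?_
            · intro hmem
              rcases Finset.mem_union.1 hmem with hA' | hN'
              · exact hvns' (h1 _ hA').2.1
              · exact hu' ((hmemN (u, z)).1 hN').1
            · intro hmem
              apply hmem
              exact Finset.mem_union.2 (Or.inr ((hmemN (z, u)).2
                ⟨rfl, Finset.mem_erase.2 ⟨hu', hu⟩, hadj.symm⟩))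
          · have e1 : (u, z) ∈ A' ∪ N ↔ (u, z) ∈ A' := by
              rw [Finset.mem_union]
              exact ⟨fun h => h.resolve_right (fun hN' => hu' ((hmemN _).1 hN').1), Or.inl⟩
            have e2 : (z, u) ∈ A' ∪ N ↔ (z, u) ∈ A' := by
              rw [Finset.mem_union]
              exact ⟨fun h => h.resolve_right (fun hN' => hz' ((hmemN _).1 hN').1), Or.inl⟩
            rw [e1, e2]
            exact h2 u z (Finset.mem_erase.2 ⟨hu', hu⟩) (Finset.mem_erase.2 ⟨hz', hz⟩) hadj
      · intro a ha
        dsimp only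
        rcases Finset.mem_union.1 ha with hA' | hN'
        · have m1 : a.1 ∈ s' := (h1 a hA').1
          have m2 : a.2 ∈ s' := (h1 a hA').2.1
          rw [if_neg (Finset.ne_of_mem_erase m1), if_neg (Finset.ne_of_mem_erase m2)]
          exact h3 a hA'
        · obtain ⟨e1, e2, _⟩ := (hmemN a).1 hN'
          rw [if_neg (Finset.ne_of_mem_erase e2), e1, if_pos rfl]
          exact h4 a.2 e2
      · intro u hu
        dsimp only
        by_cases hu' : u = v
        · rw [if_pos hu', hs']
          exact Finset.card_erase_lt_of_mem hv
        · rw [if_neg hu']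
          exact lt_trans (h4 u (Finset.mem_erase.2 ⟨hu', hu⟩)) (Finset.card_erase_lt_of_mem hv)
      · intro u
        rw [arcOutDeg, Finset.filter_union]
        refine le_trans (Finset.card_union_le _ _) ?_
        by_cases hu' : u = v
        · subst hu'
          have e0 : A'.filter (fun a => a.1 = u) = ∅ := by
            rw [Finset.filter_eq_empty_iff]
            intro a ha h
            exact hvns' (h ▸ (h1 a ha).1)
          rw [e0]
          simp only [Finset.card_empty, zero_add]
          refine le_trans (Finset.card_le_card (Finset.filter_subset _ _)) ?_
          refine le_trans (Finset.card_image_le) ?_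
          refine le_trans (Finset.card_le_card ?_) hdeg
          exact Finset.filter_subset_filter _ (Finset.erase_subset _ _)
        · have e0 : N.filter (fun a => a.1 = u) = ∅ := by
            rw [Finset.filter_eq_empty_iff]
            intro a ha h
            exact hu' (h.symm.trans ((hmemN a).1 ha).1)
          rw [e0]
          simp only [Finset.card_empty, add_zero]
          exact h5 u

lemma alonTarsiNumber_le_of_degenerate [Fintype V] {G : SimpleGraph V} {m : ℕ}
    (hG : Degenerate m G) : alonTarsiNumber G ≤ m + 1 := by
  obtain ⟨A, r, h1, h2, h3, _, h5⟩ := exists_acyclic_orientation G m hG Finset.univ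
  apply Nat.sInf_le
  exact ⟨A, ⟨fun a ha => (h1 a ha).2.2,
    fun u v huv => h2 u v (Finset.mem_univ u) (Finset.mem_univ v) huv⟩,
    isAT_of_rank r h3, fun v => Nat.lt_succ_of_le (h5 v)⟩

end AuxAT


section AuxQ

variable {V : Type*} {G : SimpleGraph V}

lemma fSum_adj {V' E W : Type*} (K : SimpleGraph (V' ⊕ E)) (H : SimpleGraph W)
    (a b : (V' ⊕ E) × W) :
    (fSum K H).Adj a b ↔
      (a.1 = b.1 ∧ (∃ u : V', a.1 = Sum.inl u) ∧ H.Adj a.2 b.2) ∨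
        (a.2 = b.2 ∧ K.Adj a.1 b.1) := by
  simp only [fSum, SimpleGraph.fromRel_adj]
  constructor
  · rintro ⟨hne, h | h⟩
    · rcases h with ⟨h1, h2, h3⟩ | ⟨h1, h2⟩
      · exact Or.inl ⟨h1, h2, h3⟩
      · exact Or.inr ⟨h1, h2⟩
    · rcases h with ⟨h1, h2, h3⟩ | ⟨h1, h2⟩
      · exact Or.inl ⟨h1.symm, h1 ▸ h2, h3.symm⟩
      · exact Or.inr ⟨h1.symm, h2.symm⟩
  · rintro (⟨h1, h2, h3⟩ | ⟨h1, h2⟩)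
    · refine ⟨fun hab => H.irrefl (hab ▸ h3), Or.inl (Or.inl ⟨h1, h2, h3⟩)⟩
    · exact ⟨fun hab => K.irrefl (hab ▸ h2), Or.inl (Or.inr ⟨h1, h2⟩)⟩

lemma qGraph_adj_inl_inl (u z : V) : ¬ (qGraph G).Adj (Sum.inl u) (Sum.inl z) := by
  simp [qGraph, SimpleGraph.fromRel_adj]

lemma qGraph_adj_inl_inr (u : V) (e : ↥G.edgeSet) :
    (qGraph G).Adj (Sum.inl u) (Sum.inr e) ↔ u ∈ (e : Sym2 V) := by
  simp [qGraph, SimpleGraph.fromRel_adj]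

lemma qGraph_adj_inr_inl (e : ↥G.edgeSet) (u : V) :
    (qGraph G).Adj (Sum.inr e) (Sum.inl u) ↔ u ∈ (e : Sym2 V) := by
  simp [qGraph, SimpleGraph.fromRel_adj]

lemma qGraph_adj_inr_inr (e f : ↥G.edgeSet) :
    (qGraph G).Adj (Sum.inr e) (Sum.inr f) ↔
      e ≠ f ∧ ∃ z : V, z ∈ (e : Sym2 V) ∧ z ∈ (f : Sym2 V) := by
  simp only [qGraph, SimpleGraph.fromRel_adj, ne_eq, Sum.inr.injEq]
  constructor
  · rintro ⟨hne, ⟨_, z, hz⟩ | ⟨_, z, hz1, hz2⟩⟩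
    · exact ⟨hne, z, hz⟩
    · exact ⟨hne, z, hz2, hz1⟩
  · rintro ⟨hne, z, hz⟩
    exact ⟨hne, Or.inl ⟨hne, z, hz⟩⟩

noncomputable def epartner (G : SimpleGraph V) (u : V) (e : ↥G.edgeSet) : V :=
  if h : u ∈ (e : Sym2 V) then Sym2.Mem.other h else u

lemma epartner_spec {u : V} {e : ↥G.edgeSet} (h : u ∈ (e : Sym2 V)) :
    (e : Sym2 V) = s(u, epartner G u e) := by
  rw [epartner, dif_pos h]
  exact (Sym2.other_spec h).symm

lemma epartner_adj {u : V} {e : ↥G.edgeSet} (h : u ∈ (e : Sym2 V)) :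
    G.Adj u (epartner G u e) := by
  have he := e.prop
  rw [epartner_spec h] at he
  exact (SimpleGraph.mem_edgeSet G).1 he

lemma epartner_mem {u : V} {e : ↥G.edgeSet} (h : u ∈ (e : Sym2 V)) :
    epartner G u e ∈ (e : Sym2 V) := by
  rw [epartner_spec h]
  exact Sym2.mem_mk_right _ _

lemma card_filter_mem_le_aux {F : Finset ↥G.edgeSet} {u : V} {T : Finset V}
    (hT : ∀ e ∈ F, u ∈ (e : Sym2 V) → epartner G u e ∈ T) :
    (F.filter fun e : ↥G.edgeSet => u ∈ (e : Sym2 V)).card ≤ (T.filter fun z => G.Adj u z).card := by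
  apply Finset.card_le_card_of_injOn (epartner G u)
  · intro e he
    rw [Finset.mem_coe, Finset.mem_filter] at he ⊢
    exact ⟨hT e he.1 he.2, epartner_adj he.2⟩
  · intro e he f hf heq
    rw [Finset.mem_coe, Finset.mem_filter] at he hf
    apply Subtype.ext
    calc (e : Sym2 V) = s(u, epartner G u e) := epartner_spec he.2
      _ = s(u, epartner G u f) := by rw [heq]
      _ = (f : Sym2 V) := (epartner_spec hf.2).symm

lemma card_filter_mem_le_degree [Fintype V] (F : Finset ↥G.edgeSet) (u : V) :
    (F.filter fun e : ↥G.edgeSet => u ∈ (e : Sym2 V)).card ≤ G.degree u := by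
  refine le_trans (card_filter_mem_le_aux (T := Finset.univ) (fun _ _ _ => Finset.mem_univ _)) ?_
  apply le_of_eq
  rw [SimpleGraph.degree]
  congr 1
  ext z
  simp [SimpleGraph.mem_neighborFinset]

lemma sym2_exists (z : Sym2 V) : ∃ a b : V, z = s(a, b) :=
  Sym2.ind (fun a b => ⟨a, b, rfl⟩) z

lemma lemC [Fintype V] {k D : ℕ}
    (hG : Degenerate k G) (hD : ∀ v : V, G.degree v ≤ D) (h2 : 2 ≤ D)
    (X : Finset (V ⊕ ↥G.edgeSet)) (hX : X.Nonempty) :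
    ∃ x ∈ X,
      ((∃ u : V, x = Sum.inl u) ∧ (X.filter fun y => (qGraph G).Adj x y).card ≤ k) ∨
      ((∃ e : ↥G.edgeSet, x = Sum.inr e) ∧
        (X.filter fun y => (qGraph G).Adj x y).card ≤ 2 * D - 2) := by
  classical
  set F : Finset ↥G.edgeSet := Finset.univ.filter (fun e => Sum.inr e ∈ X) with hF
  have hinl : ∀ u : V,
      (X.filter fun y => (qGraph G).Adj (Sum.inl u) y) =
        (F.filter fun e : ↥G.edgeSet => u ∈ (e : Sym2 V)).image Sum.inr := by
    intro u
    ext y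
    cases y with
    | inl z => simp [qGraph_adj_inl_inl]
    | inr f =>
      simp only [Finset.mem_filter, Finset.mem_image, qGraph_adj_inl_inr, hF,
        Finset.mem_univ, true_and, Sum.inr.injEq]
      constructor
      · rintro ⟨hy, hu⟩; exact ⟨f, ⟨hy, hu⟩, rfl⟩
      · rintro ⟨e, ⟨he, hu⟩, rfl⟩; exact ⟨he, hu⟩
  have hdFD : ∀ z : V, (F.filter fun e : ↥G.edgeSet => z ∈ (e : Sym2 V)).card ≤ D :=
    fun z => le_trans (card_filter_mem_le_degree F z) (hD z)
  have hinr : ∀ (e : ↥G.edgeSet) (a b : V), Sum.inr e ∈ X → (e : Sym2 V) = s(a, b) →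
      (X.filter fun y => (qGraph G).Adj (Sum.inr e) y) ⊆
        (X.filter (fun y => y = Sum.inl a ∨ y = Sum.inl b)) ∪
        ((F.filter fun f : ↥G.edgeSet => a ∈ (f : Sym2 V) ∧ f ≠ e).image (Sum.inr : ↥G.edgeSet → V ⊕ ↥G.edgeSet) ∪
         (F.filter fun f : ↥G.edgeSet => b ∈ (f : Sym2 V) ∧ f ≠ e).image (Sum.inr : ↥G.edgeSet → V ⊕ ↥G.edgeSet)) := by
    intro e a b he hab y hy
    rw [Finset.mem_filter] at hy
    obtain ⟨hyX, hyadj⟩ := hy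
    cases y with
    | inl z =>
      rw [qGraph_adj_inr_inl, hab, Sym2.mem_iff] at hyadj
      apply Finset.mem_union_left
      rw [Finset.mem_filter]
      rcases hyadj with rfl | rfl
      · exact ⟨hyX, Or.inl rfl⟩
      · exact ⟨hyX, Or.inr rfl⟩
    | inr f =>
      rw [qGraph_adj_inr_inr] at hyadj
      obtain ⟨hne, z, hz1, hz2⟩ := hyadj
      apply Finset.mem_union_right
      rw [hab, Sym2.mem_iff] at hz1
      have hfF : f ∈ F := by rw [hF]; simp [hyX]
      rcases hz1 with rfl | rfl
      · exact Finset.mem_union_left _ (Finset.mem_image_of_mem _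
          (Finset.mem_filter.2 ⟨hfF, hz2, hne.symm⟩))
      · exact Finset.mem_union_right _ (Finset.mem_image_of_mem _
          (Finset.mem_filter.2 ⟨hfF, hz2, hne.symm⟩))
  have hinr_card : ∀ (e : ↥G.edgeSet) (a b : V), Sum.inr e ∈ X → (e : Sym2 V) = s(a, b) →
      (X.filter fun y => (qGraph G).Adj (Sum.inr e) y).card ≤
        (X.filter (fun y => y = Sum.inl a ∨ y = Sum.inl b)).card +
        ((F.filter fun f : ↥G.edgeSet => a ∈ (f : Sym2 V)).card - 1) +
        ((F.filter fun f : ↥G.edgeSet => b ∈ (f : Sym2 V)).card - 1) := by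
    intro e a b he hab
    have heF : e ∈ F := by rw [hF]; simp [he]
    have hcd : ∀ c : V, c ∈ (e : Sym2 V) →
        ((F.filter fun f : ↥G.edgeSet => c ∈ (f : Sym2 V) ∧ f ≠ e).image
          (Sum.inr : ↥G.edgeSet → V ⊕ ↥G.edgeSet)).card ≤
          (F.filter fun f : ↥G.edgeSet => c ∈ (f : Sym2 V)).card - 1 := by
      intro c hc
      rw [Finset.card_image_of_injective _ Sum.inr_injective]
      have hsub : F.filter (fun f : ↥G.edgeSet => c ∈ (f : Sym2 V) ∧ f ≠ e) ⊆
          (F.filter fun f : ↥G.edgeSet => c ∈ (f : Sym2 V)).erase e := by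
        intro f hf
        rw [Finset.mem_filter] at hf
        exact Finset.mem_erase.2 ⟨hf.2.2, Finset.mem_filter.2 ⟨hf.1, hf.2.1⟩⟩
      refine le_trans (Finset.card_le_card hsub) ?_
      rw [Finset.card_erase_of_mem (Finset.mem_filter.2 ⟨heF, hc⟩)]
    have ha' : a ∈ (e : Sym2 V) := by rw [hab]; exact Sym2.mem_mk_left _ _
    have hb' : b ∈ (e : Sym2 V) := by rw [hab]; exact Sym2.mem_mk_right _ _
    have c1 := hcd a ha'
    have c2 := hcd b hb'
    have t1 := Finset.card_le_card (hinr e a b he hab)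
    have t2 := Finset.card_union_le
      (X.filter (fun y => y = Sum.inl a ∨ y = Sum.inl b))
      ((F.filter fun f : ↥G.edgeSet => a ∈ (f : Sym2 V) ∧ f ≠ e).image (Sum.inr : ↥G.edgeSet → V ⊕ ↥G.edgeSet) ∪
       (F.filter fun f : ↥G.edgeSet => b ∈ (f : Sym2 V) ∧ f ≠ e).image (Sum.inr : ↥G.edgeSet → V ⊕ ↥G.edgeSet))
    have t3 := Finset.card_union_le
      ((F.filter fun f : ↥G.edgeSet => a ∈ (f : Sym2 V) ∧ f ≠ e).image (Sum.inr : ↥G.edgeSet → V ⊕ ↥G.edgeSet))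
      ((F.filter fun f : ↥G.edgeSet => b ∈ (f : Sym2 V) ∧ f ≠ e).image (Sum.inr : ↥G.edgeSet → V ⊕ ↥G.edgeSet))
    omega
  by_cases hkD : D ≤ k
  · by_cases hU : ∃ u : V, Sum.inl u ∈ X
    · obtain ⟨u, hu⟩ := hU
      refine ⟨Sum.inl u, hu, Or.inl ⟨⟨u, rfl⟩, ?_⟩⟩
      rw [hinl u, Finset.card_image_of_injective _ Sum.inr_injective]
      exact le_trans (hdFD u) hkD
    · obtain ⟨x, hx⟩ := hX
      cases x with
      | inl u => exact absurd ⟨u, hx⟩ hU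
      | inr e =>
        obtain ⟨a, b, hab⟩ := sym2_exists (e : Sym2 V)
        refine ⟨Sum.inr e, hx, Or.inr ⟨⟨e, rfl⟩, ?_⟩⟩
        have h0 : (X.filter (fun y => y = Sum.inl a ∨ y = Sum.inl b)) = ∅ := by
          rw [Finset.filter_eq_empty_iff]
          rintro y hy (rfl | rfl)
          · exact hU ⟨a, hy⟩
          · exact hU ⟨b, hy⟩
        have hc := hinr_card e a b hx hab
        rw [h0] at hc
        simp only [Finset.card_empty] at hc
        have d1 := hdFD a
        have d2 := hdFD b
        omega
  · push_neg at hkD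
    set U0 : Finset V := Finset.univ.filter
      (fun z => Sum.inl z ∈ X ∨ ∃ e : ↥G.edgeSet, Sum.inr e ∈ X ∧ z ∈ (e : Sym2 V)) with hU0
    have hU0ne : U0.Nonempty := by
      obtain ⟨x, hx⟩ := hX
      cases x with
      | inl u => exact ⟨u, by rw [hU0]; simp [hx]⟩
      | inr e =>
        obtain ⟨a, b, hab⟩ := sym2_exists (e : Sym2 V)
        refine ⟨a, ?_⟩
        rw [hU0]
        simp only [Finset.mem_filter, Finset.mem_univ, true_and]
        exact Or.inr ⟨e, hx, by rw [hab]; exact Sym2.mem_mk_left _ _⟩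
    obtain ⟨u, huU0, hudeg⟩ := hG U0 hU0ne
    have hpartner : ∀ e ∈ F, u ∈ (e : Sym2 V) → epartner G u e ∈ U0 := by
      intro e heF hue
      rw [hU0]
      simp only [Finset.mem_filter, Finset.mem_univ, true_and]
      refine Or.inr ⟨e, ?_, epartner_mem hue⟩
      rw [hF] at heF
      simpa using heF
    have hdFu : (F.filter fun e : ↥G.edgeSet => u ∈ (e : Sym2 V)).card ≤ k :=
      le_trans (card_filter_mem_le_aux hpartner) hudeg
    by_cases huX : Sum.inl u ∈ X
    · refine ⟨Sum.inl u, huX, Or.inl ⟨⟨u, rfl⟩, ?_⟩⟩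
      rw [hinl u, Finset.card_image_of_injective _ Sum.inr_injective]
      exact hdFu
    · have hue : ∃ e : ↥G.edgeSet, Sum.inr e ∈ X ∧ u ∈ (e : Sym2 V) := by
        rw [hU0, Finset.mem_filter] at huU0
        exact huU0.2.resolve_left huX
      obtain ⟨e, heX, hue⟩ := hue
      have hab : (e : Sym2 V) = s(u, epartner G u e) := epartner_spec hue
      refine ⟨Sum.inr e, heX, Or.inr ⟨⟨e, rfl⟩, ?_⟩⟩
      have hc := hinr_card e u (epartner G u e) heX hab
      have h0 : (X.filter (fun y => y = Sum.inl u ∨ y = Sum.inl (epartner G u e))).card ≤ 1 := by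
        refine le_trans (Finset.card_le_card (s := _) (t := {Sum.inl (epartner G u e)}) ?_) ?_
        · intro y hy
          rw [Finset.mem_filter] at hy
          rcases hy.2 with rfl | rfl
          · exact absurd hy.1 huX
          · exact Finset.mem_singleton_self _
        · simp
      have d1 : 1 ≤ (F.filter fun f : ↥G.edgeSet => u ∈ (f : Sym2 V)).card :=
        Finset.card_pos.2 ⟨e, Finset.mem_filter.2 ⟨by rw [hF]; simp [heX], hue⟩⟩
      have d2 := hdFD (epartner G u e)
      omega

end AuxQ


/-- if `G` is `k`-degenerate with `Δ(G) > 1` and `H` is `l`-degenerate,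
then `AT(G +_Q H) ≤ max (2Δ(G) - 2) (k + l) + 1`. -/
theorem stmt14 {V W : Type*} [Fintype V] [Fintype W]
    (k l : ℕ) (G : SimpleGraph V) (H : SimpleGraph W)
    (hΔ : 1 < G.maxDegree) (hG : Degenerate k G) (hH : Degenerate l H) :
    alonTarsiNumber (qSum G H) ≤ max (2 * G.maxDegree - 2) (k + l) + 1 := by
  classical
  have hD2 : 2 ≤ G.maxDegree := hΔ
  have hdeg : ∀ v : V, G.degree v ≤ G.maxDegree := fun v => G.degree_le_maxDegree v
  set m := max (2 * G.maxDegree - 2) (k + l) with hm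
  have hdegen : Degenerate m (qSum G H) := by
    intro s hs
    obtain ⟨w, hwW, hwl⟩ := hH (s.image Prod.snd) (hs.image _)
    have hXne : ((s.filter fun p => p.2 = w).image Prod.fst).Nonempty := by
      rw [Finset.mem_image] at hwW
      obtain ⟨p, hp, hpw⟩ := hwW
      exact ⟨p.1, Finset.mem_image_of_mem _ (Finset.mem_filter.2 ⟨hp, hpw⟩)⟩
    set X := (s.filter fun p => p.2 = w).image Prod.fst with hX
    obtain ⟨x, hxX, hcase⟩ := lemC hG hdeg hD2 X hXne
    have hxs : (x, w) ∈ s := by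
      rw [hX, Finset.mem_image] at hxX
      obtain ⟨p, hp, hpx⟩ := hxX
      rw [Finset.mem_filter] at hp
      have hpe : p = (x, w) := Prod.ext hpx hp.2
      rw [← hpe]
      exact hp.1
    refine ⟨(x, w), hxs, ?_⟩
    have hB1 : (s.filter fun q => q.2 = w ∧ (qGraph G).Adj x q.1).card ≤
        (X.filter fun y => (qGraph G).Adj x y).card := by
      apply Finset.card_le_card_of_injOn Prod.fst
      · intro q hq
        rw [Finset.mem_coe, Finset.mem_filter] at hq ⊢
        refine ⟨?_, hq.2.2⟩
        rw [hX]
        exact Finset.mem_image_of_mem _ (Finset.mem_filter.2 ⟨hq.1, hq.2.1⟩)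
      · intro q hq q' hq' hqq
        rw [Finset.mem_coe, Finset.mem_filter] at hq hq'
        exact Prod.ext hqq (hq.2.1.trans hq'.2.1.symm)
    rcases hcase with ⟨⟨u, rfl⟩, hck⟩ | ⟨⟨e, rfl⟩, hc2⟩
    · have hsub : s.filter (fun q => (qSum G H).Adj (Sum.inl u, w) q) ⊆
          (s.filter fun q => q.2 = w ∧ (qGraph G).Adj (Sum.inl u) q.1) ∪
          (s.filter fun q => q.1 = Sum.inl u ∧ H.Adj w q.2) := by
        intro q hq
        rw [Finset.mem_filter] at hq
        obtain ⟨hqs, hadj⟩ := hq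
        rw [qSum, fSum_adj] at hadj
        rcases hadj with ⟨h1, _, h3⟩ | ⟨h1, h2⟩
        · exact Finset.mem_union_right _ (Finset.mem_filter.2 ⟨hqs, h1.symm, h3⟩)
        · exact Finset.mem_union_left _ (Finset.mem_filter.2 ⟨hqs, h1.symm, h2⟩)
      have hB2 : (s.filter fun q => q.1 = Sum.inl u ∧ H.Adj w q.2).card ≤
          ((s.image Prod.snd).filter fun z => H.Adj w z).card := by
        apply Finset.card_le_card_of_injOn Prod.snd
        · intro q hq
          rw [Finset.mem_coe, Finset.mem_filter] at hq ⊢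
          exact ⟨Finset.mem_image_of_mem _ hq.1, hq.2.2⟩
        · intro q hq q' hq' hqq
          rw [Finset.mem_coe, Finset.mem_filter] at hq hq'
          exact Prod.ext (hq.2.1.trans hq'.2.1.symm) hqq
      have htot := le_trans (Finset.card_le_card hsub) (Finset.card_union_le _ _)
      have hmkl : k + l ≤ m := le_max_right _ _
      omega
    · have hsub : s.filter (fun q => (qSum G H).Adj (Sum.inr e, w) q) ⊆
          (s.filter fun q => q.2 = w ∧ (qGraph G).Adj (Sum.inr e) q.1) := by
        intro q hq
        rw [Finset.mem_filter] at hq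
        obtain ⟨hqs, hadj⟩ := hq
        rw [qSum, fSum_adj] at hadj
        rcases hadj with ⟨_, ⟨u, hu⟩, _⟩ | ⟨h1, h2⟩
        · exact absurd hu (by simp)
        · exact Finset.mem_filter.2 ⟨hqs, h1.symm, h2⟩
      have htot := le_trans (Finset.card_le_card hsub) hB1
      have hm2 : 2 * G.maxDegree - 2 ≤ m := le_max_left _ _
      omega
  exact alonTarsiNumber_le_of_degenerate hdegen
end
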